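/- As δ → 0⁺, the integral ∫_1^∞ e^{−δ·x·log(x)} dx is asymptotic to δ^{-1}/log(1/δ), i.e. the ratio of the integral to δ^{-1}/log(1/δ) tends to 1 as δ → 0⁺. -/

import Mathlib

open Filter Real MeasureTheory Set


private noncomputable def glow (t : ℝ) : ℝ :=
  (Real.exp (-(Real.exp (-t) * (t + Real.log t))) - Real.exp (-(t * (t + Real.log t)))) *
    (t / (t + Real.log t))

private noncomputable def gup (t : ℝ) : ℝ :=
  1 / t + t / (t - 2 * Real.log t)

private lemma log_div_self_tendsto : Tendsto (fun t : ℝ => Real.log t / t) atTop (nhds 0) :=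
  Real.isLittleO_log_id_atTop.tendsto_div_nhds_zero

private lemma tsub_tendsto : Tendsto (fun t : ℝ => t - 2 * Real.log t) atTop atTop := by
  refine tendsto_atTop_mono' atTop ?_ (tendsto_id.atTop_div_const two_pos)
  filter_upwards [log_div_self_tendsto.eventually_le_const (by norm_num : (0:ℝ) < 1/4),
    eventually_gt_atTop (0:ℝ)] with t h4 ht
  have : Real.log t ≤ t / 4 := by
    rw [div_le_iff₀ ht] at h4; linarith [h4]
  simp only [id_eq]
  linarith

private lemma tadd_tendsto : Tendsto (fun t : ℝ => t + Real.log t) atTop atTop := by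
  refine tendsto_atTop_mono' atTop ?_ tendsto_id
  filter_upwards [eventually_ge_atTop (1:ℝ)] with t ht
  have : 0 ≤ Real.log t := Real.log_nonneg ht
  simp only [id_eq]; linarith

private lemma gup_tendsto : Tendsto gup atTop (nhds 1) := by
  have h1 : Tendsto (fun t : ℝ => 1 / t) atTop (nhds 0) := by
    simpa [one_div] using tendsto_inv_atTop_zero (𝕜 := ℝ)
  have hden : Tendsto (fun t : ℝ => 1 - 2 * (Real.log t / t)) atTop (nhds 1) := by
    simpa using (tendsto_const_nhds (x := (1:ℝ)) (f := atTop)).sub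
      (log_div_self_tendsto.const_mul 2)
  have h2' : Tendsto (fun t : ℝ => (1 - 2 * (Real.log t / t))⁻¹) atTop (nhds 1) := by
    simpa using hden.inv₀ (by norm_num)
  have h2 : Tendsto (fun t : ℝ => t / (t - 2 * Real.log t)) atTop (nhds 1) := by
    refine h2'.congr' ?_
    filter_upwards [eventually_gt_atTop (0:ℝ), tsub_tendsto.eventually_gt_atTop 0] with t ht hs
    have he : 1 - 2 * (Real.log t / t) = (t - 2 * Real.log t) / t := by field_simp
    rw [he, inv_div]
  have hg : gup = fun t : ℝ => 1 / t + t / (t - 2 * Real.log t) := rfl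
  rw [hg]
  simpa using h1.add h2

private lemma glow_tendsto : Tendsto glow atTop (nhds 1) := by
  have h1 : Tendsto (fun t : ℝ => Real.exp (-t) * t) atTop (nhds 0) := by
    have := Real.tendsto_pow_mul_exp_neg_atTop_nhds_zero 1
    simpa [mul_comm] using this
  have h2 : Tendsto (fun t : ℝ => Real.exp (-t) * Real.log t) atTop (nhds 0) := by
    refine squeeze_zero' ?_ ?_ h1
    · filter_upwards [eventually_ge_atTop (1:ℝ)] with t ht
      exact mul_nonneg (Real.exp_pos _).le (Real.log_nonneg ht)
    · filter_upwards [eventually_ge_atTop (1:ℝ)] with t ht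
      have : Real.log t ≤ t := (Real.log_le_sub_one_of_pos (by linarith)).trans (by linarith)
      exact mul_le_mul_of_nonneg_left this (Real.exp_pos _).le
  have hA : Tendsto (fun t : ℝ => Real.exp (-t) * (t + Real.log t)) atTop (nhds 0) := by
    have := h1.add h2
    simp only [← mul_add] at this
    simpa using this
  have e1 : Tendsto (fun t : ℝ => Real.exp (-(Real.exp (-t) * (t + Real.log t)))) atTop
      (nhds 1) := by
    have hA' : Tendsto (fun t : ℝ => -(Real.exp (-t) * (t + Real.log t))) atTop (nhds 0) := by
      simpa using hA.neg
    have := (Real.continuous_exp.tendsto 0).comp hA'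
    simpa [Function.comp_def] using this
  have hB : Tendsto (fun t : ℝ => t * (t + Real.log t)) atTop atTop :=
    tendsto_id.atTop_mul_atTop₀ tadd_tendsto
  have e2 : Tendsto (fun t : ℝ => Real.exp (-(t * (t + Real.log t)))) atTop (nhds 0) :=
    tendsto_exp_neg_atTop_nhds_zero.comp hB
  have hden : Tendsto (fun t : ℝ => 1 + Real.log t / t) atTop (nhds 1) := by
    simpa using (tendsto_const_nhds (x := (1:ℝ)) (f := atTop)).add log_div_self_tendsto
  have e3' : Tendsto (fun t : ℝ => (1 + Real.log t / t)⁻¹) atTop (nhds 1) := by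
    simpa using hden.inv₀ (by norm_num)
  have e3 : Tendsto (fun t : ℝ => t / (t + Real.log t)) atTop (nhds 1) := by
    refine e3'.congr' ?_
    filter_upwards [eventually_gt_atTop (0:ℝ), tadd_tendsto.eventually_gt_atTop 0] with t ht hs
    have he : 1 + Real.log t / t = (t + Real.log t) / t := by field_simp
    rw [he, inv_div]
  have hg : glow = fun t : ℝ =>
      (Real.exp (-(Real.exp (-t) * (t + Real.log t))) - Real.exp (-(t * (t + Real.log t)))) *
        (t / (t + Real.log t)) := rfl
  rw [hg]
  simpa using (e1.sub e2).mul e3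

private lemma my_integral_exp_neg_mul_Ioi {b : ℝ} (hb : 0 < b) (c : ℝ) :
    ∫ x in Ioi c, Real.exp (-(b * x)) = Real.exp (-(b * c)) / b := by
  have h := integral_comp_mul_left_Ioi (fun y => Real.exp (-y)) c hb
  simp only [smul_eq_mul] at h
  rw [h, integral_exp_neg_Ioi]
  ring

private lemma my_integral_exp_neg_mul_Ioc {b : ℝ} (hb : 0 < b) {a X : ℝ} (h : a ≤ X) :
    ∫ x in Ioc a X, Real.exp (-(b * x))
      = (Real.exp (-(b * a)) - Real.exp (-(b * X))) / b := by
  rw [← intervalIntegral.integral_of_le h]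
  have key : ∀ x : ℝ, HasDerivAt (fun y => -(Real.exp (-(b * y))) / b)
      (Real.exp (-(b * x))) x := by
    intro x
    have h1 : HasDerivAt (fun y : ℝ => -(b * y)) (-b) x := by
      have := ((hasDerivAt_id x).const_mul b).neg; rw [mul_one] at this; exact this
    have h2 := (h1.exp).neg.div_const b
    refine h2.congr_deriv ?_
    field_simp
  rw [intervalIntegral.integral_eq_sub_of_hasDerivAt (fun x _ => key x)
    (Continuous.intervalIntegrable (by continuity) a X)]
  ring

private lemma my_integrableOn {δ : ℝ} (hδ : 0 < δ) :
    IntegrableOn (fun x : ℝ => Real.exp (-(δ * x * Real.log x))) (Ioi 1) := by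
  set a := δ * Real.log 2 with ha
  have ha0 : 0 < a := mul_pos hδ (Real.log_pos one_lt_two)
  have hg : IntegrableOn (fun x : ℝ => Real.exp (2 * a) * Real.exp (-a * x)) (Ioi 1) :=
    (exp_neg_integrableOn_Ioi 1 ha0).const_mul _
  refine hg.mono' ?_ ?_
  · exact (Real.measurable_exp.comp
      ((measurable_const.mul measurable_id).mul Real.measurable_log).neg).aestronglyMeasurable
  · rw [ae_restrict_iff' measurableSet_Ioi]
    filter_upwards with x hx
    have hx1 : (1 : ℝ) < x := hx
    have hlog : 0 ≤ Real.log x := Real.log_nonneg hx1.le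
    rw [Real.norm_eq_abs, abs_of_pos (Real.exp_pos _), ← Real.exp_add]
    apply Real.exp_le_exp.2
    rcases le_or_gt x 2 with h2 | h2
    · nlinarith [mul_nonneg (mul_nonneg hδ.le (by linarith : (0:ℝ) ≤ x)) hlog, ha, ha0.le]
    · have hll : Real.log 2 ≤ Real.log x := Real.log_le_log (by norm_num) h2.le
      nlinarith [mul_le_mul_of_nonneg_left hll (by positivity : (0:ℝ) ≤ δ * x), ha, ha0.le]
private lemma my_lower_bound {δ : ℝ} (h1 : 0 < δ) (h2 : 2 ≤ Real.log δ⁻¹) :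
    glow (Real.log δ⁻¹)
      ≤ (∫ x in Ioi (1:ℝ), Real.exp (-(δ * x * Real.log x))) * (δ * Real.log δ⁻¹) := by
  set L := Real.log δ⁻¹ with hLdef
  set X := δ⁻¹ * L with hXdef
  have hδinv : Real.exp 2 ≤ δ⁻¹ := by
    have h := Real.exp_le_exp.2 h2
    rwa [Real.exp_log (by positivity)] at h
  have hδinv1 : (1:ℝ) ≤ δ⁻¹ := le_trans (Real.one_le_exp (by norm_num)) hδinv
  have hX1 : (1:ℝ) ≤ X := by
    have : (1:ℝ) * 1 ≤ δ⁻¹ * L := by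
      apply mul_le_mul hδinv1 (by linarith) one_pos.le (by positivity)
    simpa using this
  have hlogL : 0 < Real.log L := Real.log_pos (by linarith)
  have hlogX : Real.log X = L + Real.log L := by
    rw [hXdef, Real.log_mul (by positivity) (by linarith)]
  set b := δ * Real.log X with hbdef
  have hlogXpos : 0 < Real.log X := by rw [hlogX]; linarith
  have hb0 : 0 < b := mul_pos h1 hlogXpos
  -- integrabilities
  have intf : IntegrableOn (fun x : ℝ => Real.exp (-(δ * x * Real.log x))) (Ioc 1 X) :=
    (my_integrableOn h1).mono_set Ioc_subset_Ioi_self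
  have intb : IntegrableOn (fun x : ℝ => Real.exp (-(b * x))) (Ioc 1 X) := by
    have := (exp_neg_integrableOn_Ioi 1 hb0).mono_set (Ioc_subset_Ioi_self : Ioc 1 X ⊆ Ioi 1)
    simpa [neg_mul] using this
  have step1 : ∫ x in Ioc 1 X, Real.exp (-(b * x))
      ≤ ∫ x in Ioc 1 X, Real.exp (-(δ * x * Real.log x)) := by
    refine setIntegral_mono_on intb intf measurableSet_Ioc fun x hx => ?_
    apply Real.exp_le_exp.2
    have hx1 : (1:ℝ) < x := hx.1
    have hlx : Real.log x ≤ Real.log X := Real.log_le_log (by linarith) hx.2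
    have : δ * x * Real.log x ≤ δ * x * Real.log X :=
      mul_le_mul_of_nonneg_left hlx (by positivity)
    nlinarith [mul_le_mul_of_nonneg_left hlx (by positivity : (0:ℝ) ≤ δ * x)]
  have step2 : ∫ x in Ioc 1 X, Real.exp (-(δ * x * Real.log x))
      ≤ ∫ x in Ioi (1:ℝ), Real.exp (-(δ * x * Real.log x)) := by
    refine setIntegral_mono_set (my_integrableOn h1) ?_
      (HasSubset.Subset.eventuallyLE Ioc_subset_Ioi_self)
    filter_upwards with x using (Real.exp_pos _).le
  have hval : ∫ x in Ioc 1 X, Real.exp (-(b * x))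
      = (Real.exp (-(b * 1)) - Real.exp (-(b * X))) / b :=
    my_integral_exp_neg_mul_Ioc hb0 hX1
  have hglow : glow L = (Real.exp (-(b * 1)) - Real.exp (-(b * X))) / b * (δ * L) := by
    have hexp : Real.exp (-L) = δ := by
      rw [hLdef, Real.log_inv, neg_neg, Real.exp_log h1]
    have hbX : b * X = L * (L + Real.log L) := by
      rw [hbdef, hlogX, hXdef]; field_simp
    have hb1 : b * 1 = δ * (L + Real.log L) := by rw [hbdef, hlogX, mul_one]
    rw [glow, hexp, hbX, hb1]
    rw [hbdef, hlogX]
    have hd : L + Real.log L ≠ 0 := by linarith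
    field_simp
  rw [hglow, ← hval]
  have hfin := step1.trans step2
  exact mul_le_mul_of_nonneg_right hfin (by positivity)
private lemma my_upper_bound {δ : ℝ} (h1 : 0 < δ) (h2 : 2 ≤ Real.log δ⁻¹)
    (h3 : δ * (Real.log δ⁻¹) ^ 2 ≤ 1 / 2)
    (h4 : 1 ≤ Real.log δ⁻¹ - 2 * Real.log (Real.log δ⁻¹)) :
    (∫ x in Ioi (1:ℝ), Real.exp (-(δ * x * Real.log x))) * (δ * Real.log δ⁻¹)
      ≤ gup (Real.log δ⁻¹) := by
  set L := Real.log δ⁻¹ with hLdef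
  have hL0 : (0:ℝ) < L := by linarith
  set Y := δ⁻¹ / L ^ 2 with hYdef
  have hY2 : (2:ℝ) ≤ Y := by
    have h5 : 2 * L ^ 2 * δ ≤ 1 := by nlinarith
    have h6 : (2:ℝ) * L ^ 2 ≤ δ⁻¹ := by
      rw [← one_div, le_div_iff₀ h1]; linarith
    rw [hYdef, le_div_iff₀ (by positivity : (0:ℝ) < L ^ 2)]
    linarith
  have hY1 : (1:ℝ) ≤ Y := by linarith
  have hlogY : Real.log Y = L - 2 * Real.log L := by
    rw [hYdef, Real.log_div (by positivity) (by positivity), Real.log_pow]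
    push_cast
    rw [hLdef]
  have hlogYpos : (0:ℝ) < Real.log Y := by rw [hlogY]; linarith
  set c := δ * Real.log Y with hcdef
  have hc0 : 0 < c := mul_pos h1 hlogYpos
  -- split the integral
  have intf1 : IntegrableOn (fun x : ℝ => Real.exp (-(δ * x * Real.log x))) (Ioc 1 Y) :=
    (my_integrableOn h1).mono_set Ioc_subset_Ioi_self
  have intf2 : IntegrableOn (fun x : ℝ => Real.exp (-(δ * x * Real.log x))) (Ioi Y) :=
    (my_integrableOn h1).mono_set (Ioi_subset_Ioi (by linarith))
  have hsplit : ∫ x in Ioi (1:ℝ), Real.exp (-(δ * x * Real.log x))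
      = (∫ x in Ioc 1 Y, Real.exp (-(δ * x * Real.log x)))
        + ∫ x in Ioi Y, Real.exp (-(δ * x * Real.log x)) := by
    rw [← setIntegral_union (Ioc_disjoint_Ioi le_rfl) measurableSet_Ioi intf1 intf2,
      Ioc_union_Ioi_eq_Ioi (by linarith : (1:ℝ) ≤ Y)]
  have bound1 : ∫ x in Ioc 1 Y, Real.exp (-(δ * x * Real.log x)) ≤ Y - 1 := by
    have hle : ∫ x in Ioc 1 Y, Real.exp (-(δ * x * Real.log x))
        ≤ ∫ _x in Ioc (1:ℝ) Y, (1:ℝ) := by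
      refine setIntegral_mono_on intf1 (integrableOn_const ?_)
        measurableSet_Ioc fun x hx => ?_
      · rw [Real.volume_Ioc]; exact ENNReal.ofReal_ne_top
      · rw [Real.exp_le_one_iff]
        have hx1 : (1:ℝ) < x := hx.1
        have hlx : 0 ≤ Real.log x := Real.log_nonneg hx1.le
        nlinarith [mul_nonneg (mul_nonneg h1.le (le_trans zero_le_one hx1.le)) hlx]
    rwa [setIntegral_const, Real.volume_real_Ioc, smul_eq_mul, mul_one,
      max_eq_left (by linarith)] at hle
  have bound2 : ∫ x in Ioi Y, Real.exp (-(δ * x * Real.log x)) ≤ 1 / c := by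
    have intc : IntegrableOn (fun x : ℝ => Real.exp (-(c * x))) (Ioi Y) := by
      simpa [neg_mul] using exp_neg_integrableOn_Ioi Y hc0
    have hle : ∫ x in Ioi Y, Real.exp (-(δ * x * Real.log x))
        ≤ ∫ x in Ioi Y, Real.exp (-(c * x)) := by
      refine setIntegral_mono_on intf2 intc measurableSet_Ioi fun x hx => ?_
      apply Real.exp_le_exp.2
      have hx1 : Y < x := hx
      have hly : Real.log Y ≤ Real.log x := Real.log_le_log (by linarith) hx1.le
      nlinarith [mul_le_mul_of_nonneg_left hly
        (mul_nonneg h1.le (by linarith : (0:ℝ) ≤ x))]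
    rw [my_integral_exp_neg_mul_Ioi hc0 Y] at hle
    refine hle.trans ?_
    have hexp1 : Real.exp (-(c * Y)) ≤ 1 :=
      Real.exp_le_one_iff.2 (by nlinarith)
    gcongr
  have hIle : (∫ x in Ioi (1:ℝ), Real.exp (-(δ * x * Real.log x))) ≤ Y - 1 + 1 / c := by
    rw [hsplit]; exact add_le_add bound1 bound2
  have hmul := mul_le_mul_of_nonneg_right hIle (by positivity : (0:ℝ) ≤ δ * L)
  refine hmul.trans ?_
  have hd : L - 2 * Real.log L ≠ 0 := by linarith
  have heq : (Y + 1 / c) * (δ * L) = gup L := by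
    rw [gup, hYdef, hcdef, hlogY]
    field_simp
  have hle2 : (Y - 1 + 1 / c) * (δ * L) ≤ (Y + 1 / c) * (δ * L) := by
    apply mul_le_mul_of_nonneg_right (by linarith) (by positivity)
  linarith [heq ▸ hle2]

/-- `∫_1^∞ e^{-δ x log x} dx ~ δ⁻¹/log(1/δ)` as `δ → 0⁺`. -/
theorem integral_exp_asymptotics :
    Filter.Tendsto
      (fun δ : ℝ =>
        (∫ x in Set.Ioi (1 : ℝ), Real.exp (-(δ * x * Real.log x))) /
          (δ⁻¹ / Real.log (1 / δ)))
      (nhdsWithin 0 (Set.Ioi 0)) (nhds 1) := by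
  have hL : Tendsto (fun δ : ℝ => Real.log δ⁻¹) (nhdsWithin 0 (Set.Ioi 0)) atTop := by
    have h := Real.tendsto_log_nhdsGT_zero
    have h2 := tendsto_neg_atBot_atTop.comp h
    refine h2.congr fun δ => ?_
    simp [Real.log_inv]
  have hδL2 : Tendsto (fun δ : ℝ => δ * (Real.log δ⁻¹) ^ 2)
      (nhdsWithin 0 (Set.Ioi 0)) (nhds 0) := by
    have base := tendsto_log_mul_rpow_nhdsGT_zero (by norm_num : (0:ℝ) < 1/2)
    have h : Tendsto (fun x : ℝ => Real.log x * x ^ (1/2:ℝ) * (Real.log x * x ^ (1/2:ℝ)))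
        (nhdsWithin 0 (Set.Ioi 0)) (nhds 0) := by simpa using base.mul base
    refine h.congr' ?_
    filter_upwards [eventually_mem_nhdsWithin] with δ hδ
    have hδ0 : (0:ℝ) < δ := hδ
    have hhalf : (δ:ℝ) ^ (1/2:ℝ) * δ ^ (1/2:ℝ) = δ := by
      rw [← Real.rpow_add hδ0]; norm_num
    rw [Real.log_inv]
    linear_combination (Real.log δ) ^ 2 * hhalf
  have ev1 : ∀ᶠ δ in nhdsWithin (0:ℝ) (Set.Ioi 0), (0:ℝ) < δ := eventually_mem_nhdsWithin
  have ev2 := hL.eventually_ge_atTop 2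
  have ev3 : ∀ᶠ δ in nhdsWithin (0:ℝ) (Set.Ioi 0), δ * (Real.log δ⁻¹) ^ 2 ≤ 1/2 :=
    hδL2.eventually_le_const (by norm_num : (0:ℝ) < 1/2)
  have ev4 := (tsub_tendsto.comp hL).eventually_ge_atTop 1
  have main : Tendsto (fun δ : ℝ =>
      (∫ x in Set.Ioi (1:ℝ), Real.exp (-(δ * x * Real.log x))) * (δ * Real.log δ⁻¹))
      (nhdsWithin 0 (Set.Ioi 0)) (nhds 1) := by
    refine tendsto_of_tendsto_of_tendsto_of_le_of_le' (glow_tendsto.comp hL)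
      (gup_tendsto.comp hL) ?_ ?_
    · filter_upwards [ev1, ev2] with δ h1 h2
      exact my_lower_bound h1 h2
    · filter_upwards [ev1, ev2, ev3, ev4] with δ h1 h2 h3 h4
      exact my_upper_bound h1 h2 h3 h4
  refine main.congr' ?_
  filter_upwards [ev1, ev2] with δ h1 h2
  rw [one_div]
  have hδ : δ ≠ 0 := ne_of_gt h1
  have hLne : Real.log δ⁻¹ ≠ 0 := by linarith
  field_simp
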